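/- Let ℓ_1, …, ℓ_m : ℝ^n → ℝ be continuously differentiable and bounded below, with ℓ_i* = inf_{θ ∈ ℝ^n} ℓ_i(θ) > −∞. Define g(θ) = min_{ω ∈ Δ^m} ‖Σ_{i=1}^m ω_i ∇ℓ_i(θ)‖². Let θ : [0, ∞) → ℝ^n be differentiable and α : [0, ∞) → [0, ∞) locally integrable with ∫_0^t α(s) ds → ∞ as t → ∞, and suppose that for every s ≥ 0 and every i ∈ [m], (d/ds) ℓ_i(θ(s)) ≤ −α(s) g(θ(s)). Then for every ε > 0 there exists a finite time t_ε ≥ 0 with g(θ(t_ε)) ≤ ε; that is, the trajectory enters the set of Pareto ε-stationary points in finite time. -/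

import Mathlib

/-- finite-entry part of Theorem 2: if `∫₀ᵗ α → ∞` and
`(d/ds) ℓᵢ(θ(s)) ≤ -α(s) g(θ(s))` for all `s ≥ 0`, then for every `ε > 0`
the trajectory reaches a point with `g(θ(t_ε)) ≤ ε` in finite time. -/
theorem stmt_6 {n m : ℕ} (hm : 0 < m)
    (ℓ : Fin m → EuclideanSpace ℝ (Fin n) → ℝ)
    (hC1 : ∀ i, ContDiff ℝ 1 (ℓ i))
    (hbdd : ∀ i, BddBelow (Set.range (ℓ i)))
    (g : EuclideanSpace ℝ (Fin n) → ℝ)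
    (hg : ∀ x, g x = sInf {r : ℝ | ∃ ω : Fin m → ℝ,
      (∀ i, 0 ≤ ω i) ∧ (∑ i, ω i = 1) ∧ r = ‖∑ i, ω i • gradient (ℓ i) x‖ ^ 2})
    (θ : ℝ → EuclideanSpace ℝ (Fin n)) (hθ : Differentiable ℝ θ)
    (α : ℝ → ℝ) (hα0 : ∀ s, 0 ≤ α s)
    (hαint : ∀ t : ℝ, IntervalIntegrable α MeasureTheory.volume 0 t)
    (hαdiv : Filter.Tendsto (fun t => ∫ s in (0 : ℝ)..t, α s)
      Filter.atTop Filter.atTop)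
    (hderiv : ∀ i, ∀ s : ℝ, 0 ≤ s →
      deriv (fun u => ℓ i (θ u)) s ≤ -(α s * g (θ s))) :
    ∀ ε > (0 : ℝ), ∃ tε : ℝ, 0 ≤ tε ∧ g (θ tε) ≤ ε := by
  intro ε hε
  by_contra hcon
  push_neg at hcon
  set i : Fin m := ⟨0, hm⟩
  obtain ⟨c, hc⟩ := hbdd i
  set f : ℝ → ℝ := fun u => ℓ i (θ u) with hf
  have hfd : Differentiable ℝ f := ((hC1 i).differentiable one_ne_zero).comp hθ
  -- main estimate
  have key : ∀ t : ℝ, 0 ≤ t → f t - f 0 ≤ -(ε * ∫ s in (0:ℝ)..t, α s) := by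
    intro t ht
    have φint : MeasureTheory.IntegrableOn (fun s => -(ε * α s))
        (Set.Icc 0 t) MeasureTheory.volume := by
      have := (hαint t).1
      rw [integrableOn_Icc_iff_integrableOn_Ioc]
      exact ((this.const_mul ε).neg)
    have hle : f t - f 0 ≤ ∫ s in (0:ℝ)..t, -(ε * α s) := by
      apply intervalIntegral.sub_le_integral_of_hasDeriv_right_of_le ht
        (hfd.continuous.continuousOn)
        (fun x _ => ((hfd x).hasDerivAt).hasDerivWithinAt) φint
      intro x hx
      have h1 : deriv f x ≤ -(α x * g (θ x)) := hderiv i x hx.1.le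
      have h2 : α x * ε ≤ α x * g (θ x) :=
        mul_le_mul_of_nonneg_left (hcon x hx.1.le).le (hα0 x)
      nlinarith
    calc f t - f 0 ≤ ∫ s in (0:ℝ)..t, -(ε * α s) := hle
      _ = -(ε * ∫ s in (0:ℝ)..t, α s) := by
          rw [intervalIntegral.integral_neg, intervalIntegral.integral_const_mul]
  -- choose a large time
  have hev : ∀ᶠ t in Filter.atTop,
      (f 0 - c) / ε + 1 ≤ ∫ s in (0:ℝ)..t, α s :=
    hαdiv.eventually_ge_atTop _
  obtain ⟨t, ht0, hINT⟩ := (hev.and (Filter.eventually_ge_atTop (0:ℝ))).exists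
  have hct : c ≤ f t := hc ⟨θ t, rfl⟩
  have := key t hINT
  have hεI : ε * ((f 0 - c) / ε + 1) ≤ ε * ∫ s in (0:ℝ)..t, α s :=
    mul_le_mul_of_nonneg_left ht0 hε.le
  have hεdiv : ε * ((f 0 - c) / ε + 1) = (f 0 - c) + ε := by
    field_simp
  nlinarith
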